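/- Suppose q : (0,∞) → [0,∞) is measurable, integrable, and satisfies t^{μ+1} q(t) → C as t → ∞ for some constants μ > 0 and C > 0, and sup_{t>1} t^{μ+1} q(t) < ∞. Then for n ≥ 2, ρ^{n-1+2μ} ∫₀^∞ e^{-ρ²/(4t)} q(t) t^{-(n-1)/2} dt → C · 2^{2μ+n-1} Γ(μ + (n-1)/2) as ρ → ∞. -/

import Mathlib

open MeasureTheory Set Real Filter

set_option maxHeartbeats 2000000 in
theorem stmt_15 (q : ℝ → ℝ) (μ C : ℝ) (hμ : 0 < μ) (hC : 0 < C)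
    (hmeas : Measurable q) (hnn : ∀ t > (0:ℝ), 0 ≤ q t)
    (hint : IntegrableOn q (Ioi 0))
    (hasym : Tendsto (fun t : ℝ => t ^ (μ+1) * q t) atTop (nhds C))
    (hbdd : ∃ M : ℝ, ∀ t > (1:ℝ), t ^ (μ+1) * q t ≤ M)
    (n : ℕ) (hn : 2 ≤ n) :
    Tendsto (fun ρ : ℝ =>
        ρ ^ ((n:ℝ) - 1 + 2*μ) *
          ∫ t in Ioi (0:ℝ), Real.exp (-ρ^2/(4*t)) * q t * t ^ (-(((n:ℝ)-1)/2)))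
      atTop (nhds (C * (2:ℝ) ^ (2*μ + (n:ℝ) - 1) * Real.Gamma (μ + ((n:ℝ)-1)/2))) := by
  obtain ⟨M, hM⟩ := hbdd
  have hn2 : (2:ℝ) ≤ (n:ℝ) := by exact_mod_cast hn
  set ν : ℝ := ((n:ℝ)-1)/2 with hν_def
  set P : ℝ := (n:ℝ) - 1 + 2*μ with hP_def
  have hν : (1:ℝ)/2 ≤ ν := by rw [hν_def]; linarith
  have hν0 : (0:ℝ) < ν := by linarith
  have hνn : ν ≤ (n:ℝ) := by rw [hν_def]; linarith
  have hμν : 0 < μ + ν := by linarith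
  have hP2 : P = 2*ν + 2*μ := by rw [hP_def, hν_def]; ring
  set q₁ : ℝ → ℝ := (Ioi (1:ℝ)).indicator q with hq₁_def
  have hq₁meas : Measurable q₁ := hmeas.indicator measurableSet_Ioi
  have hq₁nn : ∀ t : ℝ, 0 ≤ q₁ t := by
    intro t
    by_cases ht : t ∈ Ioi (1:ℝ)
    · rw [hq₁_def, indicator_of_mem ht]; exact hnn t (lt_trans one_pos ht)
    · rw [hq₁_def, indicator_of_notMem ht]
  set M' : ℝ := max M 0 with hM'_def
  have hM'0 : 0 ≤ M' := le_max_right _ _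
  have hF₁le : ∀ t : ℝ, t ^ (μ+1) * q₁ t ≤ M' := by
    intro t
    by_cases ht : t ∈ Ioi (1:ℝ)
    · rw [hq₁_def, indicator_of_mem ht]
      exact le_trans (hM t ht) (le_max_left _ _)
    · rw [hq₁_def, indicator_of_notMem ht, mul_zero]; exact hM'0
  set K : ℝ := (n.factorial : ℝ) * 8^n with hK_def
  have hK0 : (0:ℝ) < K := by rw [hK_def]; positivity
  -- pointwise kernel bound on (0,1]
  have hpt : ∀ ρ : ℝ, 1 ≤ ρ → ∀ t ∈ Ioc (0:ℝ) 1,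
      Real.exp (-ρ^2/(4*t)) * t ^ (-ν) ≤ Real.exp (-(ρ^2/8)) * K := by
    intro ρ hρ t ⟨ht0, ht1⟩
    have hρ0 : (0:ℝ) < ρ := lt_of_lt_of_le one_pos hρ
    have hρ2 : (1:ℝ) ≤ ρ^2 := by nlinarith
    have e1 : -ρ^2/(4*t) = (-(ρ^2/(8*t))) + (-(ρ^2/(8*t))) := by
      field_simp; ring
    rw [e1, Real.exp_add]
    have b1 : Real.exp (-(ρ^2/(8*t))) ≤ Real.exp (-(ρ^2/8)) := by
      apply Real.exp_le_exp.mpr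
      rw [neg_le_neg_iff, div_le_div_iff₀ (by positivity) (by positivity)]
      nlinarith
    have hx : (0:ℝ) < 1/(8*t) := by positivity
    have h1 : Real.exp (-(1/(8*t))) ≤ (n.factorial:ℝ) * (8*t)^n := by
      rw [Real.exp_neg]
      have h2 := Real.pow_div_factorial_le_exp (1/(8*t)) hx.le n
      have h3 : (0:ℝ) < (1/(8*t))^n / n.factorial := by positivity
      calc (Real.exp (1/(8*t)))⁻¹ ≤ ((1/(8*t))^n / n.factorial)⁻¹ := inv_anti₀ h3 h2
        _ = (n.factorial:ℝ) * (8*t)^n := by rw [inv_div, one_div, inv_pow, div_inv_eq_mul]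
    have b2 : Real.exp (-(ρ^2/(8*t))) * t^(-ν) ≤ K := by
      calc Real.exp (-(ρ^2/(8*t))) * t^(-ν)
          ≤ Real.exp (-(1/(8*t))) * t^(-ν) := by
            apply mul_le_mul_of_nonneg_right _ (Real.rpow_nonneg ht0.le _)
            apply Real.exp_le_exp.mpr
            rw [neg_le_neg_iff, div_le_div_iff₀ (by positivity) (by positivity)]
            nlinarith
        _ ≤ ((n.factorial:ℝ) * (8*t)^n) * t^(-ν) :=
            mul_le_mul_of_nonneg_right h1 (Real.rpow_nonneg ht0.le _)
        _ = K * (t^(n:ℝ) * t^(-ν)) := by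
            rw [hK_def, Real.rpow_natCast, mul_pow]; ring
        _ = K * t^((n:ℝ) + (-ν)) := by rw [Real.rpow_add ht0]
        _ ≤ K * 1 := by
            apply mul_le_mul_of_nonneg_left _ hK0.le
            exact Real.rpow_le_one ht0.le ht1 (by linarith)
        _ = K := mul_one K
    calc Real.exp (-(ρ^2/(8*t))) * Real.exp (-(ρ^2/(8*t))) * t^(-ν)
        = Real.exp (-(ρ^2/(8*t))) * (Real.exp (-(ρ^2/(8*t))) * t^(-ν)) := by ring
      _ ≤ Real.exp (-(ρ^2/8)) * K := by
          apply mul_le_mul b1 b2 _ (Real.exp_nonneg _)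
          positivity
  -- pointwise product bound on (0,1]
  have hple : ∀ ρ : ℝ, 1 ≤ ρ → ∀ t ∈ Ioc (0:ℝ) 1,
      Real.exp (-ρ^2/(4*t)) * q t * t ^ (-ν) ≤ (Real.exp (-(ρ^2/8)) * K) * q t := by
    intro ρ hρ t ht
    calc Real.exp (-ρ^2/(4*t)) * q t * t ^ (-ν)
        = (Real.exp (-ρ^2/(4*t)) * t ^ (-ν)) * q t := by ring
      _ ≤ (Real.exp (-(ρ^2/8)) * K) * q t :=
          mul_le_mul_of_nonneg_right (hpt ρ hρ t ht) (hnn t ht.1)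
  -- measurability of the t-integrand
  have hmeas0 : ∀ ρ : ℝ, Measurable (fun t : ℝ => Real.exp (-ρ^2/(4*t)) * q t * t ^ (-ν)) := by
    intro ρ
    fun_prop
  have hmeas1 : ∀ ρ : ℝ, Measurable (fun t : ℝ => Real.exp (-ρ^2/(4*t)) * q₁ t * t ^ (-ν)) := by
    intro ρ
    fun_prop
  -- integrability on (0,1]
  have hI1 : ∀ ρ : ℝ, 1 ≤ ρ →
      IntegrableOn (fun t : ℝ => Real.exp (-ρ^2/(4*t)) * q t * t ^ (-ν)) (Ioc 0 1) := by
    intro ρ hρ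
    apply Integrable.mono' ((hint.mono_set Ioc_subset_Ioi_self).const_mul
      (Real.exp (-(ρ^2/8)) * K)) (hmeas0 ρ).aestronglyMeasurable
    filter_upwards [ae_restrict_mem measurableSet_Ioc] with t ht
    rw [Real.norm_eq_abs, abs_of_nonneg (by
      exact mul_nonneg (mul_nonneg (Real.exp_nonneg _) (hnn t ht.1)) (Real.rpow_nonneg ht.1.le _))]
    exact hple ρ hρ t ht
  -- integrability on (1,∞)
  have hI2 : ∀ ρ : ℝ, 1 ≤ ρ →
      IntegrableOn (fun t : ℝ => Real.exp (-ρ^2/(4*t)) * q t * t ^ (-ν)) (Ioi 1) := by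
    intro ρ hρ
    apply Integrable.mono' (hint.mono_set (Ioi_subset_Ioi zero_le_one))
      (hmeas0 ρ).aestronglyMeasurable
    filter_upwards [ae_restrict_mem measurableSet_Ioi] with t ht
    have ht0 : (0:ℝ) < t := lt_trans one_pos ht
    have he1 : Real.exp (-ρ^2/(4*t)) ≤ 1 := by
      apply Real.exp_le_one_iff.mpr
      rw [neg_div]
      exact neg_nonpos.mpr (by positivity)
    have hr1 : t ^ (-ν) ≤ 1 := Real.rpow_le_one_of_one_le_of_nonpos (le_of_lt ht) (by linarith)
    rw [Real.norm_eq_abs, abs_of_nonneg (by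
      exact mul_nonneg (mul_nonneg (Real.exp_nonneg _) (hnn t ht0)) (Real.rpow_nonneg ht0.le _))]
    calc Real.exp (-ρ^2/(4*t)) * q t * t ^ (-ν)
        ≤ 1 * q t * 1 := by
          apply mul_le_mul _ hr1 (Real.rpow_nonneg ht0.le _)
            (mul_nonneg zero_le_one (hnn t ht0))
          exact mul_le_mul he1 le_rfl (hnn t ht0) zero_le_one
      _ = q t := by ring
  -- scalar identity
  have hscal : ∀ ρ : ℝ, 1 ≤ ρ → ∀ s : ℝ, 0 < s →
      ρ^P * ((ρ^2/4/s^2) * ((ρ^2/4/s)^(-ν)))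
        = (ρ^2/4/s)^(μ+1) * (4:ℝ)^(μ+ν) * s^(μ+ν-1) := by
    intro ρ hρ s hs
    have hρ0 : (0:ℝ) < ρ := lt_of_lt_of_le one_pos hρ
    have ha : (0:ℝ) < ρ^2/4 := by positivity
    have hb : (0:ℝ) < ρ^2/4/s := by positivity
    have hL : (0:ℝ) < ρ^P * ((ρ^2/4/s^2) * ((ρ^2/4/s)^(-ν))) := by positivity
    have hR : (0:ℝ) < (ρ^2/4/s)^(μ+1) * (4:ℝ)^(μ+ν) * s^(μ+ν-1) := by positivity
    have l1 : Real.log (ρ^2/4/s^2) = 2*Real.log ρ - Real.log 4 - 2*Real.log s := by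
      rw [Real.log_div (ne_of_gt ha) (by positivity), Real.log_div (by positivity) (by norm_num),
        Real.log_pow, Real.log_pow]
      push_cast; ring
    have l2 : Real.log (ρ^2/4/s) = 2*Real.log ρ - Real.log 4 - Real.log s := by
      rw [Real.log_div (ne_of_gt ha) (ne_of_gt hs), Real.log_div (by positivity) (by norm_num),
        Real.log_pow]
      push_cast; ring
    rw [← Real.exp_log hL, ← Real.exp_log hR]
    congr 1
    rw [Real.log_mul (by positivity) (by positivity), Real.log_mul (by positivity) (by positivity),
      Real.log_mul (by positivity) (by positivity), Real.log_mul (by positivity) (by positivity),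
      Real.log_rpow hρ0, Real.log_rpow hb, Real.log_rpow hb,
      Real.log_rpow (by norm_num : (0:ℝ) < 4), Real.log_rpow hs, l1, l2, hP2]
    ring
  -- the split identity
  have hsplit : ∀ ρ : ℝ, 1 ≤ ρ →
      ρ ^ P * ∫ t in Ioi (0:ℝ), Real.exp (-ρ^2/(4*t)) * q t * t ^ (-ν)
        = ρ ^ P * (∫ t in Ioc (0:ℝ) 1, Real.exp (-ρ^2/(4*t)) * q t * t ^ (-ν))
          + ∫ s in Ioi (0:ℝ), Real.exp (-s) * ((ρ^2/4/s) ^ (μ+1) * q₁ (ρ^2/4/s))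
              * (4:ℝ)^(μ+ν) * s^(μ+ν-1) := by
    intro ρ hρ
    have hρ0 : (0:ℝ) < ρ := lt_of_lt_of_le one_pos hρ
    have ha : (0:ℝ) < ρ^2/4 := by positivity
    -- split the integral
    have hsplit0 : ∫ t in Ioi (0:ℝ), Real.exp (-ρ^2/(4*t)) * q t * t ^ (-ν)
        = (∫ t in Ioc (0:ℝ) 1, Real.exp (-ρ^2/(4*t)) * q t * t ^ (-ν))
          + ∫ t in Ioi (1:ℝ), Real.exp (-ρ^2/(4*t)) * q t * t ^ (-ν) := by
      rw [← setIntegral_union (Ioc_disjoint_Ioi le_rfl) measurableSet_Ioi (hI1 ρ hρ) (hI2 ρ hρ),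
        Ioc_union_Ioi_eq_Ioi zero_le_one]
    -- replace Ioi 1 integral by q₁ integral over Ioi 0
    have hq₁int : ∫ t in Ioi (1:ℝ), Real.exp (-ρ^2/(4*t)) * q t * t ^ (-ν)
        = ∫ t in Ioi (0:ℝ), Real.exp (-ρ^2/(4*t)) * q₁ t * t ^ (-ν) := by
      have heq : ∀ t : ℝ, Real.exp (-ρ^2/(4*t)) * q₁ t * t ^ (-ν)
          = (Ioi (1:ℝ)).indicator (fun t => Real.exp (-ρ^2/(4*t)) * q t * t ^ (-ν)) t := by
        intro t
        by_cases ht : t ∈ Ioi (1:ℝ)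
        · rw [hq₁_def, indicator_of_mem ht, indicator_of_mem ht]
        · rw [hq₁_def, indicator_of_notMem ht, indicator_of_notMem ht, mul_zero, zero_mul]
      rw [show (fun t : ℝ => Real.exp (-ρ^2/(4*t)) * q₁ t * t ^ (-ν))
          = fun t => (Ioi (1:ℝ)).indicator
            (fun t => Real.exp (-ρ^2/(4*t)) * q t * t ^ (-ν)) t from funext heq,
        setIntegral_indicator measurableSet_Ioi,
        inter_eq_self_of_subset_right (Ioi_subset_Ioi zero_le_one)]
    -- change of variables t = (ρ²/4)/s
    have hCOV : ∫ t in Ioi (0:ℝ), Real.exp (-ρ^2/(4*t)) * q₁ t * t ^ (-ν)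
        = ∫ s in Ioi (0:ℝ), (ρ^2/4/s^2) *
            (Real.exp (-s) * q₁ (ρ^2/4/s) * (ρ^2/4/s) ^ (-ν)) := by
      have himg : (fun s : ℝ => ρ^2/4/s) '' Ioi 0 = Ioi 0 := by
        ext y
        constructor
        · rintro ⟨x, hx, rfl⟩
          exact div_pos ha hx
        · intro hy
          exact ⟨(ρ^2/4)/y, div_pos ha hy, by field_simp⟩
      have hderiv : ∀ x ∈ Ioi (0:ℝ),
          HasDerivWithinAt (fun s : ℝ => ρ^2/4/s) (-(ρ^2/4/x^2)) (Ioi 0) x := by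
        intro x hx
        have h1 : HasDerivAt (fun s : ℝ => (ρ^2/4) * s⁻¹) ((ρ^2/4) * (-(x^2)⁻¹)) x :=
          (hasDerivAt_inv (ne_of_gt hx)).const_mul (ρ^2/4)
        have h2 : (ρ^2/4) * (-(x^2)⁻¹) = -(ρ^2/4/x^2) := by field_simp
        have h3 : (fun s : ℝ => (ρ^2/4) * s⁻¹) = fun s : ℝ => ρ^2/4/s := by
          funext s; ring
        rw [h2, h3] at h1
        exact h1.hasDerivWithinAt
      have hinj : InjOn (fun s : ℝ => ρ^2/4/s) (Ioi 0) := by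
        intro x hx y hy h
        simp only at h
        rw [div_eq_div_iff (ne_of_gt hx) (ne_of_gt hy)] at h
        exact (mul_left_cancel₀ (ne_of_gt ha) h).symm
      calc ∫ t in Ioi (0:ℝ), Real.exp (-ρ^2/(4*t)) * q₁ t * t ^ (-ν)
          = ∫ t in (fun s : ℝ => ρ^2/4/s) '' Ioi 0,
              Real.exp (-ρ^2/(4*t)) * q₁ t * t ^ (-ν) := by rw [himg]
        _ = ∫ s in Ioi (0:ℝ), |(-(ρ^2/4/s^2))| •
              (Real.exp (-ρ^2/(4*(ρ^2/4/s))) * q₁ (ρ^2/4/s) * (ρ^2/4/s) ^ (-ν)) :=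
            integral_image_eq_integral_abs_deriv_smul measurableSet_Ioi hderiv hinj _
        _ = ∫ s in Ioi (0:ℝ), (ρ^2/4/s^2) *
              (Real.exp (-s) * q₁ (ρ^2/4/s) * (ρ^2/4/s) ^ (-ν)) := by
            apply setIntegral_congr_fun measurableSet_Ioi
            intro s hs
            have hs0 : (0:ℝ) < s := hs
            have harg : -ρ^2/(4*(ρ^2/4/s)) = -s := by
              field_simp
            simp only [abs_neg, smul_eq_mul, harg]
            rw [abs_of_nonneg (by positivity)]
    rw [hsplit0, hq₁int, hCOV, mul_add]
    congr 1
    rw [← integral_const_mul]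
    apply setIntegral_congr_fun measurableSet_Ioi
    intro s hs
    have hs0 : (0:ℝ) < s := hs
    have h := hscal ρ hρ s hs0
    calc ρ^P * ((ρ^2/4/s^2) * (Real.exp (-s) * q₁ (ρ^2/4/s) * (ρ^2/4/s) ^ (-ν)))
        = (Real.exp (-s) * q₁ (ρ^2/4/s)) * (ρ^P * ((ρ^2/4/s^2) * ((ρ^2/4/s)^(-ν)))) := by ring
      _ = (Real.exp (-s) * q₁ (ρ^2/4/s)) *
            ((ρ^2/4/s)^(μ+1) * (4:ℝ)^(μ+ν) * s^(μ+ν-1)) := by rw [h]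
      _ = Real.exp (-s) * ((ρ^2/4/s) ^ (μ+1) * q₁ (ρ^2/4/s))
            * (4:ℝ)^(μ+ν) * s^(μ+ν-1) := by ring
  -- Term 1 tends to 0
  set J : ℝ := ∫ t in Ioc (0:ℝ) 1, q t with hJ_def
  have hJ0 : 0 ≤ J := by
    rw [hJ_def]
    exact setIntegral_nonneg measurableSet_Ioc fun t ht => hnn t ht.1
  have hT1 : Tendsto (fun ρ : ℝ =>
      ρ ^ P * ∫ t in Ioc (0:ℝ) 1, Real.exp (-ρ^2/(4*t)) * q t * t ^ (-ν))
      atTop (nhds 0) := by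
    apply squeeze_zero' (g := fun ρ : ℝ => (K*J) * (ρ^P * Real.exp (-(1/8) * ρ)))
    · filter_upwards [eventually_ge_atTop (1:ℝ)] with ρ hρ
      have hρ0 : (0:ℝ) < ρ := lt_of_lt_of_le one_pos hρ
      apply mul_nonneg (Real.rpow_nonneg hρ0.le _)
      exact setIntegral_nonneg measurableSet_Ioc fun t ht =>
        mul_nonneg (mul_nonneg (Real.exp_nonneg _) (hnn t ht.1)) (Real.rpow_nonneg ht.1.le _)
    · filter_upwards [eventually_ge_atTop (1:ℝ)] with ρ hρ
      have hρ0 : (0:ℝ) < ρ := lt_of_lt_of_le one_pos hρ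
      have hmono : ∫ t in Ioc (0:ℝ) 1, Real.exp (-ρ^2/(4*t)) * q t * t ^ (-ν)
          ≤ (Real.exp (-(ρ^2/8)) * K) * J := by
        rw [hJ_def, ← integral_const_mul]
        exact setIntegral_mono_on (hI1 ρ hρ)
          ((hint.mono_set Ioc_subset_Ioi_self).const_mul _) measurableSet_Ioc (hple ρ hρ)
      calc ρ ^ P * ∫ t in Ioc (0:ℝ) 1, Real.exp (-ρ^2/(4*t)) * q t * t ^ (-ν)
          ≤ ρ ^ P * ((Real.exp (-(ρ^2/8)) * K) * J) :=
            mul_le_mul_of_nonneg_left hmono (Real.rpow_nonneg hρ0.le _)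
        _ = (K*J) * (ρ^P * Real.exp (-(ρ^2/8))) := by ring
        _ ≤ (K*J) * (ρ^P * Real.exp (-(1/8) * ρ)) := by
            apply mul_le_mul_of_nonneg_left _ (mul_nonneg hK0.le hJ0)
            apply mul_le_mul_of_nonneg_left _ (Real.rpow_nonneg hρ0.le _)
            apply Real.exp_le_exp.mpr
            nlinarith
    · have h0 := (tendsto_rpow_mul_exp_neg_mul_atTop_nhds_zero P (1/8)
        (by norm_num)).const_mul (K*J)
      simpa using h0
  -- Term 2: dominated convergence
  have hT2 : Tendsto (fun ρ : ℝ => ∫ s in Ioi (0:ℝ),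
      Real.exp (-s) * ((ρ^2/4/s) ^ (μ+1) * q₁ (ρ^2/4/s)) * (4:ℝ)^(μ+ν) * s^(μ+ν-1))
      atTop (nhds (∫ s in Ioi (0:ℝ), (C * (4:ℝ)^(μ+ν)) * (Real.exp (-s) * s^(μ+ν-1)))) := by
    apply tendsto_integral_filter_of_dominated_convergence
      (bound := fun s => (M' * (4:ℝ)^(μ+ν)) * (Real.exp (-s) * s^(μ+ν-1)))
    · apply Filter.Eventually.of_forall
      intro ρ
      apply Measurable.aestronglyMeasurable
      fun_prop
    · filter_upwards [eventually_ge_atTop (1:ℝ)] with ρ hρ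
      filter_upwards [ae_restrict_mem measurableSet_Ioi] with s hs
      have hs0 : (0:ℝ) < s := hs
      have hρ0 : (0:ℝ) < ρ := lt_of_lt_of_le one_pos hρ
      have hb : (0:ℝ) < ρ^2/4/s := by positivity
      have hnnG : 0 ≤ Real.exp (-s) * ((ρ^2/4/s) ^ (μ+1) * q₁ (ρ^2/4/s))
          * (4:ℝ)^(μ+ν) * s^(μ+ν-1) := by
        apply mul_nonneg (mul_nonneg (mul_nonneg (Real.exp_nonneg _) _)
          (Real.rpow_nonneg (by norm_num) _)) (Real.rpow_nonneg hs0.le _)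
        exact mul_nonneg (Real.rpow_nonneg hb.le _) (hq₁nn _)
      rw [Real.norm_eq_abs, abs_of_nonneg hnnG]
      calc Real.exp (-s) * ((ρ^2/4/s) ^ (μ+1) * q₁ (ρ^2/4/s)) * (4:ℝ)^(μ+ν) * s^(μ+ν-1)
          ≤ Real.exp (-s) * M' * (4:ℝ)^(μ+ν) * s^(μ+ν-1) := by
            apply mul_le_mul_of_nonneg_right _ (Real.rpow_nonneg hs0.le _)
            apply mul_le_mul_of_nonneg_right _ (Real.rpow_nonneg (by norm_num) _)
            exact mul_le_mul_of_nonneg_left (hF₁le _) (Real.exp_nonneg _)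
        _ = (M' * (4:ℝ)^(μ+ν)) * (Real.exp (-s) * s^(μ+ν-1)) := by ring
    · exact (Real.GammaIntegral_convergent hμν).const_mul _
    · filter_upwards [ae_restrict_mem measurableSet_Ioi] with s hs
      have hs0 : (0:ℝ) < s := hs
      have htend : Tendsto (fun ρ : ℝ => ρ^2/4/s) atTop atTop :=
        Tendsto.atTop_div_const hs0
          (Tendsto.atTop_div_const (by norm_num) (tendsto_pow_atTop two_ne_zero))
      have hq₁asym : Tendsto (fun x : ℝ => x^(μ+1) * q₁ x) atTop (nhds C) := by
        apply Tendsto.congr' _ hasym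
        filter_upwards [eventually_gt_atTop (1:ℝ)] with x hx
        rw [hq₁_def, indicator_of_mem (show x ∈ Ioi (1:ℝ) from hx)]
      have hcomp := hq₁asym.comp htend
      have h := ((hcomp.const_mul (Real.exp (-s))).mul_const ((4:ℝ)^(μ+ν))).mul_const
        (s^(μ+ν-1))
      simp only [Function.comp] at h
      rw [show (C * (4:ℝ)^(μ+ν)) * (Real.exp (-s) * s^(μ+ν-1))
        = Real.exp (-s) * C * (4:ℝ)^(μ+ν) * s^(μ+ν-1) from by ring]
      convert h using 2 with ρ
  have hGamma : ∫ s in Ioi (0:ℝ), (C * (4:ℝ)^(μ+ν)) * (Real.exp (-s) * s^(μ+ν-1))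
      = (C * (4:ℝ)^(μ+ν)) * Real.Gamma (μ+ν) := by
    rw [integral_const_mul, ← Real.Gamma_eq_integral hμν]
  rw [hGamma] at hT2
  have h42 : (4:ℝ)^(μ+ν) = (2:ℝ)^(2*μ + (n:ℝ) - 1) := by
    rw [show (4:ℝ) = (2:ℝ)^(2:ℕ) from by norm_num, ← Real.rpow_natCast (2:ℝ) 2,
      ← Real.rpow_mul (by norm_num : (0:ℝ) ≤ 2)]
    congr 1
    rw [hν_def]
    push_cast
    ring
  have hfin := hT1.add hT2
  rw [show C * (2:ℝ)^(2*μ + (n:ℝ) - 1) * Real.Gamma (μ+ν)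
    = 0 + (C * (4:ℝ)^(μ+ν)) * Real.Gamma (μ+ν) from by rw [h42]; ring]
  apply Tendsto.congr' _ hfin
  filter_upwards [eventually_ge_atTop (1:ℝ)] with ρ hρ
  exact (hsplit ρ hρ).symm
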